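/- arXiv:2510.16609 — 4 statements merged into one kernel-verified Lean document; each statement's English description precedes it below -/
import Mathlib

section
/- Let n ≥ 2, p ∈ (0,1), α ∈ (0, 1/5], γ ∈ (0,1], let C ⊆ {1,…,n} be a fixed set of size c with c ≥ γn/2, and let G* ∼ G(n,p) be an Erdős–Rényi random graph. Then with probability at least 1 − n·exp(−α²(n−1)p/3) − n·exp(−α²cp/3), every vertex u ∉ C satisfies |N_{G*}(u)| ≤ (1+α)(n−1)p and |N_{G*}(u) ∩ C| ≥ (1−α)cp, and consequently |N_{G*}(u) ∩ C| ≥ (γ/3)·|N_{G*}(u)|. -/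
/-- The number of edges of a simple graph on `Fin n`. -/
noncomputable def edgeCount {n : ℕ} (G : SimpleGraph (Fin n)) : ℕ :=
  letI : DecidableRel G.Adj := Classical.decRel _
  G.edgeFinset.card

/-- The probability, under the Erdős–Rényi random graph measure `G(n, p)` (each of the
`n.choose 2` possible edges present independently with probability `p`), of a set `A` of
graphs: each graph `G` has probability `p ^ |E(G)| * (1 - p) ^ (C(n,2) - |E(G)|)`. -/
noncomputable def erProb (n : ℕ) (p : ℝ) (A : Set (SimpleGraph (Fin n))) : ℝ :=
  ∑ G : SimpleGraph (Fin n),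
    Set.indicator A (fun G => p ^ edgeCount G * (1 - p) ^ (n.choose 2 - edgeCount G)) G

/-- The neighborhood (as a finite set) of vertex `u` in a simple graph `G` on `Fin n`. -/
noncomputable def nbrFinset {n : ℕ} (G : SimpleGraph (Fin n)) (u : Fin n) : Finset (Fin n) :=
  letI : DecidableRel G.Adj := Classical.decRel _
  G.neighborFinset u


noncomputable def eFin {n : ℕ} (G : SimpleGraph (Fin n)) : Finset (Sym2 (Fin n)) :=
  letI : DecidableRel G.Adj := Classical.decRel _
  G.edgeFinset

lemma mem_eFin {n : ℕ} {G : SimpleGraph (Fin n)} {e} : e ∈ eFin G ↔ e ∈ G.edgeSet := by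
  classical
  unfold eFin
  exact SimpleGraph.mem_edgeFinset

lemma edgeCount_eq {n : ℕ} (G : SimpleGraph (Fin n)) : edgeCount G = (eFin G).card := rfl

lemma mem_nbrFinset {n : ℕ} {G : SimpleGraph (Fin n)} {u v} :
    v ∈ nbrFinset G u ↔ G.Adj u v := by
  classical
  unfold nbrFinset
  exact SimpleGraph.mem_neighborFinset _ _ _

def EU (n : ℕ) : Finset (Sym2 (Fin n)) := Finset.univ.filter (fun e => ¬ e.IsDiag)

lemma card_EU (n : ℕ) : (EU n).card = n.choose 2 := by
  classical
  have : EU n = (⊤ : SimpleGraph (Fin n)).edgeFinset := by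
    ext e
    simp [EU, SimpleGraph.mem_edgeFinset, SimpleGraph.edgeSet_top]
  rw [this, SimpleGraph.card_edgeFinset_top_eq_card_choose_two, Fintype.card_fin]

lemma eFin_subset {n : ℕ} (G : SimpleGraph (Fin n)) : eFin G ⊆ EU n := by
  intro e he
  rw [mem_eFin] at he
  simp [EU, SimpleGraph.not_isDiag_of_mem_edgeSet _ he]

lemma transport {n : ℕ} (f : Finset (Sym2 (Fin n)) → ℝ) :
    ∑ G : SimpleGraph (Fin n), f (eFin G) = ∑ F ∈ (EU n).powerset, f F := by
  classical
  refine Finset.sum_nbij' (fun G => eFin G) (fun F => SimpleGraph.fromEdgeSet ↑F) ?_ ?_ ?_ ?_ ?_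
  · intro G _
    exact Finset.mem_powerset.2 (eFin_subset G)
  · intro F _; exact Finset.mem_univ _
  · intro G _
    have : (↑(eFin G) : Set (Sym2 (Fin n))) = G.edgeSet := by
      ext e; simp [mem_eFin]
    show SimpleGraph.fromEdgeSet ↑(eFin G) = G
    rw [this, SimpleGraph.fromEdgeSet_edgeSet]
  · intro F hF
    rw [Finset.mem_powerset] at hF
    ext e
    rw [mem_eFin, SimpleGraph.edgeSet_fromEdgeSet]
    constructor
    · rintro ⟨he, -⟩; exact_mod_cast he
    · intro he
      refine ⟨he, ?_⟩
      have := hF he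
      simpa [EU] using this
  · intro G _; rfl

lemma mgf_core {n : ℕ} (p r : ℝ) {T : Finset (Sym2 (Fin n))} (hT : T ⊆ EU n) :
    ∑ F ∈ (EU n).powerset, p ^ F.card * (1 - p) ^ ((EU n).card - F.card) * r ^ (F ∩ T).card
      = (1 - p + p * r) ^ T.card := by
  classical
  have key : ∀ F ∈ (EU n).powerset,
      p ^ F.card * (1 - p) ^ ((EU n).card - F.card) * r ^ (F ∩ T).card
        = (∏ e ∈ F, (p * if e ∈ T then r else 1)) * ∏ _e ∈ EU n \ F, (1 - p) := by
    intro F hF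
    rw [Finset.mem_powerset] at hF
    rw [Finset.prod_mul_distrib, Finset.prod_const, Finset.prod_const, Finset.prod_ite_mem,
      Finset.prod_const, Finset.card_sdiff_of_subset hF]
    ring
  rw [Finset.sum_congr rfl key, ← Finset.prod_add]
  rw [← Finset.prod_sdiff hT]
  have h1 : ∀ e ∈ EU n \ T, (p * if e ∈ T then r else 1) + (1 - p) = 1 := by
    intro e he
    rw [Finset.mem_sdiff] at he
    simp [he.2]
  have h2 : ∀ e ∈ T, (p * if e ∈ T then r else 1) + (1 - p) = 1 - p + p * r := by
    intro e he; simp [he]; ring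
  rw [Finset.prod_congr rfl h1, Finset.prod_congr rfl h2, Finset.prod_const_one,
    Finset.prod_const, one_mul]

noncomputable def W (n : ℕ) (p : ℝ) (G : SimpleGraph (Fin n)) : ℝ :=
  p ^ edgeCount G * (1 - p) ^ (n.choose 2 - edgeCount G)

lemma card_nbr_inter {n : ℕ} (G : SimpleGraph (Fin n)) {u : Fin n} {D : Finset (Fin n)}
    (huD : u ∉ D) :
    (nbrFinset G u ∩ D).card = (eFin G ∩ D.image (fun v => s(u, v))).card := by
  classical
  refine Finset.card_bij (fun v _ => s(u, v)) ?_ ?_ ?_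
  · intro v hv
    rw [Finset.mem_inter] at hv
    rw [Finset.mem_inter, mem_eFin, SimpleGraph.mem_edgeSet]
    exact ⟨(mem_nbrFinset).1 hv.1, Finset.mem_image_of_mem _ hv.2⟩
  · intro a ha b hb h
    exact Sym2.congr_right.1 h
  · intro e he
    rw [Finset.mem_inter] at he
    obtain ⟨v, hv, rfl⟩ := Finset.mem_image.1 he.2
    refine ⟨v, ?_, rfl⟩
    rw [Finset.mem_inter, mem_nbrFinset]
    have := (mem_eFin).1 he.1
    rw [SimpleGraph.mem_edgeSet] at this
    exact ⟨this, hv⟩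

lemma mgf_graph {n : ℕ} (p r : ℝ) {u : Fin n} {D : Finset (Fin n)} (huD : u ∉ D) :
    ∑ G : SimpleGraph (Fin n), W n p G * r ^ ((nbrFinset G u ∩ D).card)
      = (1 - p + p * r) ^ D.card := by
  classical
  set T : Finset (Sym2 (Fin n)) := D.image (fun v => s(u, v)) with hTdef
  have hinj : Function.Injective (fun v : Fin n => s(u, v)) := fun a b h =>
    Sym2.congr_right.1 h
  have hTcard : T.card = D.card := Finset.card_image_of_injective _ hinj
  have hT : T ⊆ EU n := by
    intro e he
    obtain ⟨v, hv, rfl⟩ := Finset.mem_image.1 he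
    have : v ≠ u := fun h => huD (h ▸ hv)
    simp [EU, Sym2.mk_isDiag_iff, Ne.symm this]
  have step : ∑ G : SimpleGraph (Fin n), W n p G * r ^ ((nbrFinset G u ∩ D).card)
      = ∑ G : SimpleGraph (Fin n),
        (fun F : Finset (Sym2 (Fin n)) =>
          p ^ F.card * (1 - p) ^ ((EU n).card - F.card) * r ^ ((F ∩ T).card)) (eFin G) := by
    refine Finset.sum_congr rfl fun G _ => ?_
    simp only [W, edgeCount_eq, card_nbr_inter G huD, card_EU]; rfl
  rw [step, transport (fun F : Finset (Sym2 (Fin n)) =>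
    p ^ F.card * (1 - p) ^ ((EU n).card - F.card) * r ^ ((F ∩ T).card)),
    mgf_core p r hT, hTcard]

lemma sum_W (n : ℕ) (p : ℝ) : ∑ G : SimpleGraph (Fin n), W n p G = 1 := by
  classical
  have step : ∑ G : SimpleGraph (Fin n), W n p G
      = ∑ G : SimpleGraph (Fin n),
        (fun F : Finset (Sym2 (Fin n)) =>
          p ^ F.card * (1 - p) ^ ((EU n).card - F.card) * (1:ℝ) ^ ((F ∩ (∅:Finset (Sym2 (Fin n)))).card)) (eFin G) := by
    refine Finset.sum_congr rfl fun G _ => ?_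
    simp [W, edgeCount_eq, card_EU]
  rw [step, transport (fun F : Finset (Sym2 (Fin n)) =>
    p ^ F.card * (1 - p) ^ ((EU n).card - F.card) * (1:ℝ) ^ ((F ∩ (∅:Finset (Sym2 (Fin n)))).card)),
    mgf_core p 1 (Finset.empty_subset _)]
  simp

lemma W_nonneg {n : ℕ} {p : ℝ} (hp0 : 0 ≤ p) (hp1 : p ≤ 1) (G : SimpleGraph (Fin n)) :
    0 ≤ W n p G := by
  unfold W
  have : (0:ℝ) ≤ 1 - p := by linarith
  positivity

lemma exp_taylor3 {x : ℝ} (hx : |x| ≤ 1) :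
    Real.exp x ≤ 1 + x + x^2 / 2 + (2/9) * |x|^3 := by
  have h := Real.exp_bound hx (n := 3) (by norm_num)
  have hsum : ∑ m ∈ Finset.range 3, x ^ m / m.factorial = 1 + x + x^2/2 := by
    simp [Finset.sum_range_succ]
  rw [hsum] at h
  have h2 := (abs_sub_le_iff.1 h).1
  have hc : (((3:ℕ).succ : ℝ)) / (((3:ℕ).factorial :ℝ) * ((3:ℕ):ℝ)) = 2/9 := by
    norm_num [Nat.factorial]
  rw [hc] at h2
  linarith

lemma exp_upper {α : ℝ} (h0 : 0 < α) (h1 : α ≤ 1/5) :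
    Real.exp α ≤ 1 + α + (2/3) * α^2 := by
  have hx : |α| ≤ 1 := by rw [abs_of_pos h0]; linarith
  have h := exp_taylor3 hx
  rw [abs_of_pos h0] at h
  nlinarith [sq_nonneg α, pow_pos h0 3]

lemma exp_lower {α : ℝ} (h0 : 0 < α) (h1 : α ≤ 1/5) :
    Real.exp (-α) ≤ 1 - α + (2/3) * α^2 := by
  have hx : |(-α)| ≤ 1 := by rw [abs_neg, abs_of_pos h0]; linarith
  have h := exp_taylor3 hx
  rw [abs_neg, abs_of_pos h0] at h
  nlinarith [sq_nonneg α, pow_pos h0 3]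

lemma chernoff_up {n : ℕ} {p α : ℝ} (hp0 : 0 < p) (hp1 : p < 1) (hα0 : 0 < α)
    (hα1 : α ≤ 1/5) {u : Fin n} {D : Finset (Fin n)} (huD : u ∉ D) :
    ∑ G : SimpleGraph (Fin n), W n p G *
      (if (1+α) * (D.card : ℝ) * p < ((nbrFinset G u ∩ D).card : ℝ) then (1:ℝ) else 0)
      ≤ Real.exp (-α^2 * (D.card : ℝ) * p / 3) := by
  classical
  set m : ℕ := D.card with hm
  set θ : ℝ := (1+α) * (m:ℝ) * p with hθ
  have key : ∀ G : SimpleGraph (Fin n),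
      W n p G * (if θ < ((nbrFinset G u ∩ D).card : ℝ) then (1:ℝ) else 0)
      ≤ Real.exp (-(α * θ)) * (W n p G * (Real.exp α) ^ ((nbrFinset G u ∩ D).card)) := by
    intro G
    set x : ℕ := (nbrFinset G u ∩ D).card with hx
    have hw := W_nonneg hp0.le hp1.le G
    have hrx : (Real.exp α) ^ x = Real.exp ((x:ℝ) * α) := (Real.exp_nat_mul α x).symm
    rw [hrx, mul_comm (Real.exp (-(α * θ))) _, mul_assoc, ← Real.exp_add]
    split_ifs with h
    · rw [mul_one]
      have h1 : (1:ℝ) ≤ Real.exp ((x:ℝ) * α + -(α * θ)) := by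
        apply Real.one_le_exp
        nlinarith
      calc W n p G = W n p G * 1 := (mul_one _).symm
        _ ≤ W n p G * Real.exp ((x:ℝ) * α + -(α * θ)) := mul_le_mul_of_nonneg_left h1 hw
    · rw [mul_zero]
      positivity
  calc ∑ G : SimpleGraph (Fin n), W n p G *
        (if θ < ((nbrFinset G u ∩ D).card : ℝ) then (1:ℝ) else 0)
      ≤ ∑ G : SimpleGraph (Fin n),
        Real.exp (-(α * θ)) * (W n p G * (Real.exp α) ^ ((nbrFinset G u ∩ D).card)) :=
        Finset.sum_le_sum fun G _ => key G
    _ = Real.exp (-(α * θ)) * (1 - p + p * Real.exp α) ^ m := by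
        rw [← Finset.mul_sum, mgf_graph p (Real.exp α) huD]
    _ ≤ Real.exp (-(α * θ)) * (Real.exp (p * (Real.exp α - 1))) ^ m := by
        apply mul_le_mul_of_nonneg_left _ (Real.exp_pos _).le
        apply pow_le_pow_left₀
        · nlinarith [Real.exp_pos α]
        · have := Real.add_one_le_exp (p * (Real.exp α - 1))
          linarith
    _ = Real.exp (-(α * θ) + (m:ℝ) * (p * (Real.exp α - 1))) := by
        rw [← Real.exp_nat_mul, ← Real.exp_add]
    _ ≤ Real.exp (-α^2 * (m:ℝ) * p / 3) := by
        apply Real.exp_le_exp.2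
        have hE := exp_upper hα0 hα1
        have hmp : (0:ℝ) ≤ (m:ℝ) * p := by positivity
        have key2 : (m:ℝ) * p * (Real.exp α - 1 - α - α^2) ≤ (m:ℝ) * p * (-α^2/3) := by
          apply mul_le_mul_of_nonneg_left _ hmp
          nlinarith
        rw [hθ]
        nlinarith

lemma chernoff_down {n : ℕ} {p α : ℝ} (hp0 : 0 < p) (hp1 : p < 1) (hα0 : 0 < α)
    (hα1 : α ≤ 1/5) {u : Fin n} {D : Finset (Fin n)} (huD : u ∉ D) :
    ∑ G : SimpleGraph (Fin n), W n p G *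
      (if ((nbrFinset G u ∩ D).card : ℝ) < (1-α) * (D.card : ℝ) * p then (1:ℝ) else 0)
      ≤ Real.exp (-α^2 * (D.card : ℝ) * p / 3) := by
  classical
  set m : ℕ := D.card with hm
  set θ : ℝ := (1-α) * (m:ℝ) * p with hθ
  have key : ∀ G : SimpleGraph (Fin n),
      W n p G * (if ((nbrFinset G u ∩ D).card : ℝ) < θ then (1:ℝ) else 0)
      ≤ Real.exp (α * θ) * (W n p G * (Real.exp (-α)) ^ ((nbrFinset G u ∩ D).card)) := by
    intro G
    set x : ℕ := (nbrFinset G u ∩ D).card with hx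
    have hw := W_nonneg hp0.le hp1.le G
    have hrx : (Real.exp (-α)) ^ x = Real.exp ((x:ℝ) * (-α)) := (Real.exp_nat_mul (-α) x).symm
    rw [hrx, mul_comm (Real.exp (α * θ)) _, mul_assoc, ← Real.exp_add]
    split_ifs with h
    · rw [mul_one]
      have h1 : (1:ℝ) ≤ Real.exp ((x:ℝ) * -α + α * θ) := by
        apply Real.one_le_exp
        nlinarith
      calc W n p G = W n p G * 1 := (mul_one _).symm
        _ ≤ W n p G * Real.exp ((x:ℝ) * -α + α * θ) := mul_le_mul_of_nonneg_left h1 hw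
    · rw [mul_zero]
      positivity
  calc ∑ G : SimpleGraph (Fin n), W n p G *
        (if ((nbrFinset G u ∩ D).card : ℝ) < θ then (1:ℝ) else 0)
      ≤ ∑ G : SimpleGraph (Fin n),
        Real.exp (α * θ) * (W n p G * (Real.exp (-α)) ^ ((nbrFinset G u ∩ D).card)) :=
        Finset.sum_le_sum fun G _ => key G
    _ = Real.exp (α * θ) * (1 - p + p * Real.exp (-α)) ^ m := by
        rw [← Finset.mul_sum, mgf_graph p (Real.exp (-α)) huD]
    _ ≤ Real.exp (α * θ) * (Real.exp (p * (Real.exp (-α) - 1))) ^ m := by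
        apply mul_le_mul_of_nonneg_left _ (Real.exp_pos _).le
        apply pow_le_pow_left₀
        · nlinarith [Real.exp_pos (-α)]
        · have := Real.add_one_le_exp (p * (Real.exp (-α) - 1))
          linarith
    _ = Real.exp (α * θ + (m:ℝ) * (p * (Real.exp (-α) - 1))) := by
        rw [← Real.exp_nat_mul, ← Real.exp_add]
    _ ≤ Real.exp (-α^2 * (m:ℝ) * p / 3) := by
        apply Real.exp_le_exp.2
        have hE := exp_lower hα0 hα1
        have hmp : (0:ℝ) ≤ (m:ℝ) * p := by positivity
        have key2 : (m:ℝ) * p * (Real.exp (-α) - 1 + α - α^2) ≤ (m:ℝ) * p * (-α^2/3) := by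
          apply mul_le_mul_of_nonneg_left _ hmp
          nlinarith
        rw [hθ]
        nlinarith

/-- Let `n ≥ 2`, `p ∈ (0,1)`, `α ∈ (0,1/5]`, `γ ∈ (0,1]`, let
`C ⊆ {1,…,n}` be a fixed set of size `c ≥ γn/2`, and let `G* ∼ G(n,p)`.  Then with
probability at least `1 − n·exp(−α²(n−1)p/3) − n·exp(−α²cp/3)`, every vertex `u ∉ C`
satisfies `|N(u)| ≤ (1+α)(n−1)p` and `|N(u) ∩ C| ≥ (1−α)cp`, and consequently
`|N(u) ∩ C| ≥ (γ/3)|N(u)|`. -/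
theorem stmt7 (n : ℕ) (hn : 2 ≤ n) (p α γ : ℝ) (hp0 : 0 < p) (hp1 : p < 1)
    (hα0 : 0 < α) (hα1 : α ≤ 1 / 5) (hγ0 : 0 < γ) (hγ1 : γ ≤ 1)
    (C : Finset (Fin n)) (c : ℕ) (hc : C.card = c) (hcγ : γ * n / 2 ≤ (c : ℝ)) :
    1 - (n : ℝ) * Real.exp (-α ^ 2 * ((n : ℝ) - 1) * p / 3)
      - (n : ℝ) * Real.exp (-α ^ 2 * (c : ℝ) * p / 3) ≤
    erProb n p {G | ∀ u : Fin n, u ∉ C →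
      ((nbrFinset G u).card : ℝ) ≤ (1 + α) * ((n : ℝ) - 1) * p ∧
      (1 - α) * (c : ℝ) * p ≤ ((nbrFinset G u ∩ C).card : ℝ) ∧
      (γ / 3) * ((nbrFinset G u).card : ℝ) ≤ ((nbrFinset G u ∩ C).card : ℝ)} := by
  classical
  set Good : Set (SimpleGraph (Fin n)) := {G | ∀ u : Fin n, u ∉ C →
      ((nbrFinset G u).card : ℝ) ≤ (1 + α) * ((n : ℝ) - 1) * p ∧
      (1 - α) * (c : ℝ) * p ≤ ((nbrFinset G u ∩ C).card : ℝ) ∧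
      (γ / 3) * ((nbrFinset G u).card : ℝ) ≤ ((nbrFinset G u ∩ C).card : ℝ)} with hGood
  have hn1 : (1:ℝ) ≤ (n:ℝ) := by exact_mod_cast (by omega : 1 ≤ n)
  -- deterministic implication
  have hdet : ∀ (d i : ℝ), d ≤ (1+α) * ((n:ℝ)-1) * p → (1-α) * (c:ℝ) * p ≤ i →
      (γ/3) * d ≤ i := by
    intro d i hd hi
    have k1 : (γ/3) * d ≤ (γ/3) * ((1+α) * ((n:ℝ)-1) * p) :=
      mul_le_mul_of_nonneg_left hd (by positivity)
    have h1α : (0:ℝ) ≤ 1 - α := by linarith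
    have k2 : (1-α) * (γ * (n:ℝ) / 2) * p ≤ (1-α) * (c:ℝ) * p :=
      mul_le_mul_of_nonneg_right (mul_le_mul_of_nonneg_left hcγ h1α) hp0.le
    have k3 : (γ/3) * ((1+α) * ((n:ℝ)-1) * p) ≤ (1-α) * (γ * (n:ℝ) / 2) * p := by
      nlinarith [mul_nonneg hγ0.le hp0.le, hp0.le,
        mul_nonneg (mul_nonneg hγ0.le hp0.le) (by linarith : (0:ℝ) ≤ (n:ℝ) - 1)]
    linarith
  -- indicators
  set i1 : SimpleGraph (Fin n) → Fin n → ℝ := fun G u =>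
    if (1+α) * ((n:ℝ)-1) * p < ((nbrFinset G u).card : ℝ) then (1:ℝ) else 0 with hi1
  set i2 : SimpleGraph (Fin n) → Fin n → ℝ := fun G u =>
    if ((nbrFinset G u ∩ C).card : ℝ) < (1-α) * (c:ℝ) * p then (1:ℝ) else 0 with hi2
  have hi1nn : ∀ G u, 0 ≤ i1 G u := by intro G u; rw [hi1]; dsimp; split_ifs <;> norm_num
  have hi2nn : ∀ G u, 0 ≤ i2 G u := by intro G u; rw [hi2]; dsimp; split_ifs <;> norm_num
  -- pointwise bound
  have hpt : ∀ G : SimpleGraph (Fin n),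
      (1:ℝ) - ∑ u ∈ Finset.univ \ C, (i1 G u + i2 G u)
        ≤ (if G ∈ Good then (1:ℝ) else 0) := by
    intro G
    by_cases hG : G ∈ Good
    · rw [if_pos hG]
      have : 0 ≤ ∑ u ∈ Finset.univ \ C, (i1 G u + i2 G u) :=
        Finset.sum_nonneg fun u _ => add_nonneg (hi1nn G u) (hi2nn G u)
      linarith
    · rw [if_neg hG]
      rw [hGood, Set.mem_setOf_eq] at hG
      push_neg at hG
      obtain ⟨u, hu, hviol⟩ := hG
      have hu' : u ∈ Finset.univ \ C := Finset.mem_sdiff.2 ⟨Finset.mem_univ u, hu⟩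
      have h1 : (1:ℝ) ≤ i1 G u + i2 G u := by
        by_cases hA : ((nbrFinset G u).card : ℝ) ≤ (1+α) * ((n:ℝ)-1) * p
        · by_cases hB : (1-α) * (c:ℝ) * p ≤ ((nbrFinset G u ∩ C).card : ℝ)
          · exact absurd (hdet _ _ hA hB) (not_le.2 (hviol hA hB))
          · have : i2 G u = 1 := by rw [hi2]; dsimp; rw [if_pos (lt_of_not_ge hB)]
            have := hi1nn G u
            linarith [this]
        · have : i1 G u = 1 := by rw [hi1]; dsimp; rw [if_pos (lt_of_not_ge hA)]
          linarith [hi2nn G u, this]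
      have h2 : i1 G u + i2 G u ≤ ∑ u ∈ Finset.univ \ C, (i1 G u + i2 G u) :=
        Finset.single_le_sum (f := fun u => i1 G u + i2 G u)
          (fun v _ => add_nonneg (hi1nn G v) (hi2nn G v)) hu'
      linarith
  -- erProb as weighted sum
  have herProb : erProb n p Good
      = ∑ G : SimpleGraph (Fin n), W n p G * (if G ∈ Good then (1:ℝ) else 0) := by
    refine Finset.sum_congr rfl fun G _ => ?_
    rw [Set.indicator_apply]
    split_ifs <;> simp [W]
  -- chernoff per u
  have hch1 : ∀ u : Fin n, ∑ G : SimpleGraph (Fin n), W n p G * i1 G u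
      ≤ Real.exp (-α^2 * ((n:ℝ)-1) * p / 3) := by
    intro u
    have hmem : u ∉ Finset.univ.erase u := Finset.notMem_erase u _
    have h := chernoff_up hp0 hp1 hα0 hα1 hmem
    have herase : ∀ G : SimpleGraph (Fin n),
        nbrFinset G u ∩ Finset.univ.erase u = nbrFinset G u := by
      intro G
      ext v
      simp only [Finset.mem_inter, Finset.mem_erase, Finset.mem_univ, and_true,
        mem_nbrFinset]
      exact ⟨fun h => h.1, fun h => ⟨h, (h.ne).symm⟩⟩
    have hcard : (((Finset.univ.erase u) : Finset (Fin n)).card : ℝ) = (n:ℝ) - 1 := by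
      rw [Finset.card_erase_of_mem (Finset.mem_univ u), Finset.card_univ, Fintype.card_fin]
      have h1 : 1 ≤ n := by omega
      rw [Nat.cast_sub h1]; norm_num
    simp only [herase, hcard] at h
    exact h
  have hch2 : ∀ u : Fin n, u ∉ C → ∑ G : SimpleGraph (Fin n), W n p G * i2 G u
      ≤ Real.exp (-α^2 * (c:ℝ) * p / 3) := by
    intro u hu
    have h := chernoff_down hp0 hp1 hα0 hα1 hu
    rw [hc] at h
    exact h
  -- put it together
  set e1 : ℝ := Real.exp (-α^2 * ((n:ℝ)-1) * p / 3) with he1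
  set e2 : ℝ := Real.exp (-α^2 * (c:ℝ) * p / 3) with he2
  have step2 : ∑ G : SimpleGraph (Fin n),
      W n p G * ((1:ℝ) - ∑ u ∈ Finset.univ \ C, (i1 G u + i2 G u))
      = 1 - ∑ u ∈ Finset.univ \ C,
          ((∑ G : SimpleGraph (Fin n), W n p G * i1 G u)
            + ∑ G : SimpleGraph (Fin n), W n p G * i2 G u) := by
    simp only [mul_sub, mul_one, Finset.mul_sum, mul_add]
    rw [Finset.sum_sub_distrib, sum_W, Finset.sum_comm]
    simp [Finset.sum_add_distrib]
  have step1 : ∑ G : SimpleGraph (Fin n),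
      W n p G * ((1:ℝ) - ∑ u ∈ Finset.univ \ C, (i1 G u + i2 G u))
      ≤ erProb n p Good := by
    rw [herProb]
    exact Finset.sum_le_sum fun G _ =>
      mul_le_mul_of_nonneg_left (hpt G) (W_nonneg hp0.le hp1.le G)
  have hsum_bound : ∑ u ∈ Finset.univ \ C,
      ((∑ G : SimpleGraph (Fin n), W n p G * i1 G u)
        + ∑ G : SimpleGraph (Fin n), W n p G * i2 G u)
      ≤ (n:ℝ) * e1 + (n:ℝ) * e2 := by
    have hbd : ∀ u ∈ Finset.univ \ C,
        (∑ G : SimpleGraph (Fin n), W n p G * i1 G u)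
          + ∑ G : SimpleGraph (Fin n), W n p G * i2 G u ≤ e1 + e2 := by
      intro u hu
      have hu' : u ∉ C := (Finset.mem_sdiff.1 hu).2
      exact add_le_add (hch1 u) (hch2 u hu')
    calc ∑ u ∈ Finset.univ \ C, ((∑ G : SimpleGraph (Fin n), W n p G * i1 G u)
            + ∑ G : SimpleGraph (Fin n), W n p G * i2 G u)
        ≤ ∑ _u ∈ Finset.univ \ C, (e1 + e2) := Finset.sum_le_sum hbd
      _ = ((Finset.univ \ C).card : ℝ) * (e1 + e2) := by
          rw [Finset.sum_const, nsmul_eq_mul]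
      _ ≤ (n:ℝ) * (e1 + e2) := by
          apply mul_le_mul_of_nonneg_right _ (by positivity)
          have : (Finset.univ \ C).card ≤ n := by
            calc (Finset.univ \ C).card ≤ (Finset.univ : Finset (Fin n)).card :=
                  Finset.card_le_card (Finset.sdiff_subset)
              _ = n := by rw [Finset.card_univ, Fintype.card_fin]
          exact_mod_cast this
      _ = (n:ℝ) * e1 + (n:ℝ) * e2 := by ring
  calc 1 - (n : ℝ) * e1 - (n : ℝ) * e2
      ≤ 1 - ∑ u ∈ Finset.univ \ C,
          ((∑ G : SimpleGraph (Fin n), W n p G * i1 G u)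
            + ∑ G : SimpleGraph (Fin n), W n p G * i2 G u) := by linarith
    _ = ∑ G : SimpleGraph (Fin n),
          W n p G * ((1:ℝ) - ∑ u ∈ Finset.univ \ C, (i1 G u + i2 G u)) := step2.symm
    _ ≤ erProb n p Good := step1
end

section
/- Let n ≥ 2, p > 0, let A be a real symmetric n×n matrix, u := n^{−1/2}(1,…,1) ∈ ℝⁿ, and suppose ‖A − (pn·uuᵀ − p·Iₙ)‖₂ ≤ β. Let v₁ be a unit-norm eigenvector of A with eigenvalue λ₁(A), the largest eigenvalue of A. Then (uᵀv₁)² ≥ λ₁(A)/(pn) − 1/n − β/(pn). -/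
/-- Let `n ≥ 2`, `p > 0`, let `A` be a real symmetric `n×n` matrix,
`u := n^{−1/2}(1,…,1)`, and suppose `‖A − (pn·uuᵀ − p·Iₙ)‖₂ ≤ β` (spectral norm).  Let `v₁`
be a unit-norm eigenvector of `A` with eigenvalue `λ₁(A)`, the largest eigenvalue of `A`.
Then `(uᵀv₁)² ≥ λ₁(A)/(pn) − 1/n − β/(pn)`. -/
theorem stmt10 (n : ℕ) (hn : 2 ≤ n) (p β : ℝ) (hp : 0 < p)
    (A : Matrix (Fin n) (Fin n) ℝ) (hA : A.IsHermitian)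
    (hnorm : ‖Matrix.toEuclideanCLM (𝕜 := ℝ)
        (A - ((p * n) • Matrix.vecMulVec (fun _ : Fin n => (Real.sqrt n)⁻¹)
            (fun _ : Fin n => (Real.sqrt n)⁻¹)
          - p • (1 : Matrix (Fin n) (Fin n) ℝ)))‖ ≤ β)
    (lam1 : ℝ) (hmax : ∀ i, hA.eigenvalues i ≤ lam1) (hex : ∃ i, hA.eigenvalues i = lam1)
    (v₁ : Fin n → ℝ) (hv : A.mulVec v₁ = lam1 • v₁) (hunit : ∑ i, v₁ i ^ 2 = 1) :
    lam1 / (p * n) - 1 / n - β / (p * n) ≤ (∑ i, (Real.sqrt n)⁻¹ * v₁ i) ^ 2 := by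
  have hn0 : (0 : ℝ) < n := by
    have : (2 : ℝ) ≤ n := by exact_mod_cast hn
    linarith
  obtain ⟨c, hc⟩ : ∃ c : ℝ, c = ∑ i, (Real.sqrt n)⁻¹ * v₁ i := ⟨_, rfl⟩
  set B : Matrix (Fin n) (Fin n) ℝ :=
    A - ((p * n) • Matrix.vecMulVec (fun _ : Fin n => (Real.sqrt n)⁻¹)
        (fun _ : Fin n => (Real.sqrt n)⁻¹)
      - p • (1 : Matrix (Fin n) (Fin n) ℝ)) with hB
  set v : EuclideanSpace ℝ (Fin n) := (WithLp.equiv 2 (Fin n → ℝ)).symm v₁ with hvdef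
  have hvnorm : ‖v‖ = 1 := by
    rw [EuclideanSpace.norm_eq]
    have : ∑ i, ‖v i‖ ^ 2 = 1 := by
      simpa [hvdef, sq_abs] using hunit
    rw [this, Real.sqrt_one]
  -- compute the quadratic form
  have hmul : B.mulVec v₁ = fun i =>
      lam1 * v₁ i - (p * n * c * (Real.sqrt n)⁻¹ - p * v₁ i) := by
    funext i
    have h1 : (Matrix.vecMulVec (fun _ : Fin n => (Real.sqrt n)⁻¹)
        (fun _ : Fin n => (Real.sqrt n)⁻¹)).mulVec v₁ i = (Real.sqrt n)⁻¹ * c := by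
      simp [Matrix.mulVec, Matrix.vecMulVec_apply, dotProduct, hc,
        Finset.mul_sum, mul_assoc]
    have h2 : A.mulVec v₁ i = lam1 * v₁ i := by rw [hv]; rfl
    simp only [hB, Matrix.sub_mulVec, Matrix.smul_mulVec, Matrix.one_mulVec,
      Pi.sub_apply, Pi.smul_apply, smul_eq_mul, h1, h2]
    ring
  have hquad : (inner ℝ v (Matrix.toEuclideanCLM (𝕜 := ℝ) B v) : ℝ)
      = lam1 + p - p * n * c ^ 2 := by
    have happ : Matrix.toEuclideanCLM (𝕜 := ℝ) B v
        = (WithLp.equiv 2 (Fin n → ℝ)).symm (B.mulVec v₁) := by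
      rw [hvdef, WithLp.equiv_symm_apply, Matrix.toEuclideanCLM_toLp]
    rw [happ, hvdef, PiLp.inner_apply]
    simp only [WithLp.equiv_symm_apply, PiLp.toLp_apply, RCLike.inner_apply, conj_trivial, hmul]
    have expand : ∀ i : Fin n, v₁ i * (lam1 * v₁ i - (p * n * c * (Real.sqrt n)⁻¹ - p * v₁ i))
        = (lam1 + p) * v₁ i ^ 2 - (p * n * c) * ((Real.sqrt n)⁻¹ * v₁ i) := fun i => by ring
    rw [Finset.sum_congr rfl (fun i _ => (mul_comm _ _).trans (expand i)), Finset.sum_sub_distrib,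
      ← Finset.mul_sum, ← Finset.mul_sum, ← hc, hunit]
    ring
  have hTv : ‖Matrix.toEuclideanCLM (𝕜 := ℝ) B v‖ ≤ β := by
    have h := (Matrix.toEuclideanCLM (𝕜 := ℝ) B).le_opNorm v
    rw [hvnorm, mul_one] at h
    exact h.trans hnorm
  have hbound : lam1 + p - p * n * c ^ 2 ≤ β := by
    rw [← hquad]
    calc (inner ℝ v (Matrix.toEuclideanCLM (𝕜 := ℝ) B v) : ℝ)
        ≤ ‖v‖ * ‖Matrix.toEuclideanCLM (𝕜 := ℝ) B v‖ := real_inner_le_norm _ _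
      _ ≤ β := by rw [hvnorm, one_mul]; exact hTv
  have hpn : 0 < p * n := by positivity
  have h2 : lam1 - p - β ≤ p * n * c ^ 2 := by linarith
  rw [← hc]
  calc lam1 / (p * n) - 1 / n - β / (p * n) = (lam1 - p - β) / (p * n) := by
        field_simp
    _ ≤ c ^ 2 := by
        rw [div_le_iff₀ hpn]; linarith [h2]
end

section
/- Let n ≥ 1 and p > 0, let A be a symmetric n×n real matrix with nonnegative entries whose row sums all lie in the interval [(1−δ₀)pn, (1+δ₀)pn], where δ₀ ≥ 0, and suppose its largest eigenvalue λ₁ lies in [(1−δ₁)pn, (1+δ₁)pn] with 0 ≤ δ₁ < 1. Set δ₀' := (1+δ₀)/(1−δ₁) − 1 and assume δ₀' > 0, and let u := n^{−1/2}(1,…,1). Then for every integer k with 0 ≤ k ≤ 1 + 1/(2δ₀'), every coordinate of the vector λ₁^{−k}·Aᵏu lies in the interval [(1−2kδ₀')/√n, (1+2kδ₀')/√n]. -/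
lemma aux_low (pn lam δ₀ δ₁ δ' a : ℝ) (hpn : 0 < pn)
    (hδ₁0 : 0 ≤ δ₁) (hδ₁1 : δ₁ < 1) (hδ' : 0 < δ')
    (heq : (1 + δ') * (1 - δ₁) = 1 + δ₀)
    (ha0 : 0 ≤ a) (ha1 : a ≤ 1)
    (hl1 : (1 - δ₁) * pn ≤ lam) (hl2 : lam ≤ (1 + δ₁) * pn) :
    (a - 2 * δ') * lam ≤ (1 - δ₀) * pn * a := by
  rcases le_or_gt (a - 2 * δ') 0 with h | h
  · have h1 : (a - 2 * δ') * lam ≤ (a - 2 * δ') * ((1 - δ₁) * pn) :=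
      mul_le_mul_of_nonpos_left hl1 h
    have hid : (1 - δ₀) * a - (a - 2 * δ') * (1 - δ₁)
        = 2 * a * δ₁ + δ' * (1 - δ₁) * (2 - a) := by linear_combination a * heq
    have h2 : 0 ≤ 2 * a * δ₁ := by positivity
    have h3 : 0 ≤ δ' * (1 - δ₁) * (2 - a) := by
      apply mul_nonneg (mul_nonneg hδ'.le (by linarith)) (by linarith)
    have key : (a - 2 * δ') * (1 - δ₁) ≤ (1 - δ₀) * a := by linarith
    nlinarith [h1, mul_le_mul_of_nonneg_right key hpn.le]
  · have h1 : (a - 2 * δ') * lam ≤ (a - 2 * δ') * ((1 + δ₁) * pn) :=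
      mul_le_mul_of_nonneg_left hl2 h.le
    have hid : (1 - δ₀) * a - (a - 2 * δ') * (1 + δ₁)
        = δ' * (2 * (1 + δ₁) - a * (1 - δ₁)) := by linear_combination a * heq
    have h2 : 0 ≤ δ' * (2 * (1 + δ₁) - a * (1 - δ₁)) := by
      apply mul_nonneg hδ'.le
      nlinarith [mul_nonneg ha0 hδ₁0]
    have key : (a - 2 * δ') * (1 + δ₁) ≤ (1 - δ₀) * a := by linarith
    nlinarith [h1, mul_le_mul_of_nonneg_right key hpn.le]

lemma aux_high (pn lam δ₀ δ₁ δ' a : ℝ) (hpn : 0 < pn)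
    (hδ₁0 : 0 ≤ δ₁) (hδ₁1 : δ₁ < 1) (hδ' : 0 < δ')
    (heq : (1 + δ') * (1 - δ₁) = 1 + δ₀)
    (ha0 : 1 ≤ a) (ha1 : a ≤ 2)
    (hl1 : (1 - δ₁) * pn ≤ lam) (hl2 : lam ≤ (1 + δ₁) * pn) :
    (1 + δ₀) * pn * a ≤ (a + 2 * δ') * lam := by
  have h1 : (a + 2 * δ') * ((1 - δ₁) * pn) ≤ (a + 2 * δ') * lam :=
    mul_le_mul_of_nonneg_left hl1 (by linarith)
  have hid : (a + 2 * δ') * (1 - δ₁) - (1 + δ₀) * a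
      = δ' * (1 - δ₁) * (2 - a) := by linear_combination a * heq
  have h3 : 0 ≤ δ' * (1 - δ₁) * (2 - a) := by
    apply mul_nonneg (mul_nonneg hδ'.le (by linarith)) (by linarith)
  have key : (1 + δ₀) * a ≤ (a + 2 * δ') * (1 - δ₁) := by linarith
  nlinarith [h1, mul_le_mul_of_nonneg_right key hpn.le]

/-- Let `n ≥ 1`, `p > 0`, let `A` be a symmetric `n×n` real matrix with
nonnegative entries whose row sums all lie in `[(1−δ₀)pn, (1+δ₀)pn]` (`δ₀ ≥ 0`), and whose
largest eigenvalue `λ₁` lies in `[(1−δ₁)pn, (1+δ₁)pn]` (`0 ≤ δ₁ < 1`).  Set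
`δ₀' := (1+δ₀)/(1−δ₁) − 1` and assume `δ₀' > 0`, and let `u := n^{−1/2}(1,…,1)`.
Then for every integer `k` with `0 ≤ k ≤ 1 + 1/(2δ₀')`, every coordinate of `λ₁^{−k}·Aᵏu`
lies in `[(1−2kδ₀')/√n, (1+2kδ₀')/√n]`. -/
theorem stmt11 (n : ℕ) (hn : 1 ≤ n) (p : ℝ) (hp : 0 < p) (δ₀ δ₁ : ℝ)
    (hδ₀ : 0 ≤ δ₀) (hδ₁0 : 0 ≤ δ₁) (hδ₁1 : δ₁ < 1)
    (A : Matrix (Fin n) (Fin n) ℝ) (hA : A.IsHermitian)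
    (hpos : ∀ i j, 0 ≤ A i j)
    (hrow : ∀ i, (1 - δ₀) * (p * n) ≤ ∑ j, A i j ∧ ∑ j, A i j ≤ (1 + δ₀) * (p * n))
    (lam1 : ℝ) (hmax : ∀ i, hA.eigenvalues i ≤ lam1) (hex : ∃ i, hA.eigenvalues i = lam1)
    (hlam : (1 - δ₁) * (p * n) ≤ lam1 ∧ lam1 ≤ (1 + δ₁) * (p * n))
    (hδ₀' : 0 < (1 + δ₀) / (1 - δ₁) - 1) :
    ∀ k : ℕ, (k : ℝ) ≤ 1 + 1 / (2 * ((1 + δ₀) / (1 - δ₁) - 1)) →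
      ∀ i : Fin n,
        (1 - 2 * k * ((1 + δ₀) / (1 - δ₁) - 1)) / Real.sqrt n ≤
            ((A ^ k).mulVec (fun _ : Fin n => (Real.sqrt n)⁻¹)) i / lam1 ^ k ∧
        ((A ^ k).mulVec (fun _ : Fin n => (Real.sqrt n)⁻¹)) i / lam1 ^ k ≤
            (1 + 2 * k * ((1 + δ₀) / (1 - δ₁) - 1)) / Real.sqrt n := by
  set δ' := (1 + δ₀) / (1 - δ₁) - 1 with hδ'def
  have hc : (0:ℝ) < 1 - δ₁ := by linarith
  have heq : (1 + δ') * (1 - δ₁) = 1 + δ₀ := by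
    rw [hδ'def, add_sub_cancel, div_mul_cancel₀ _ hc.ne']
  have hn' : (0:ℝ) < n := by exact_mod_cast Nat.lt_of_lt_of_le Nat.zero_lt_one hn
  have hpn : 0 < p * n := mul_pos hp hn'
  have hlam1 : 0 < lam1 := lt_of_lt_of_le (by nlinarith) hlam.1
  have hs : 0 < Real.sqrt n := Real.sqrt_pos.mpr hn'
  intro k
  induction k with
  | zero =>
    intro _ i
    simp [Matrix.one_mulVec, one_div]
  | succ k ih =>
    intro hk i
    have h2δ' : 0 < 2 * δ' := by linarith
    have hk1 : (k : ℝ) ≤ 1 / (2 * δ') := by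
      push_cast at hk; linarith
    have h2k : 2 * (k : ℝ) * δ' ≤ 1 := by
      have := (le_div_iff₀ h2δ').mp hk1
      linarith
    have hk' : (k : ℝ) ≤ 1 + 1 / (2 * δ') := le_trans hk1 (by linarith)
    have hkpos : (0:ℝ) ≤ (k:ℝ) := Nat.cast_nonneg k
    have hpowpos : 0 < lam1 ^ k := pow_pos hlam1 k
    set u : Fin n → ℝ := fun _ => (Real.sqrt n)⁻¹ with hu
    set v : Fin n → ℝ := (A ^ k).mulVec u with hv
    set a : ℝ := 1 - 2 * k * δ' with ha
    set b : ℝ := 1 + 2 * k * δ' with hb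
    have hva : ∀ j, a / Real.sqrt n * lam1 ^ k ≤ v j := by
      intro j
      have := (ih hk' j).1
      exact (le_div_iff₀ hpowpos).mp this
    have hvb : ∀ j, v j ≤ b / Real.sqrt n * lam1 ^ k := by
      intro j
      have := (ih hk' j).2
      exact (div_le_iff₀ hpowpos).mp this
    have hEq : ((A ^ (k+1)).mulVec u) i = ∑ j, A i j * v j := by
      rw [pow_succ', ← Matrix.mulVec_mulVec]
      simp [Matrix.mulVec, dotProduct, hv]
    have ha0 : 0 ≤ a := by linarith
    have ha1 : a ≤ 1 := by nlinarith
    have hb0 : 1 ≤ b := by nlinarith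
    have hb1 : b ≤ 2 := by linarith
    have hCa : 0 ≤ a / Real.sqrt n * lam1 ^ k := by positivity
    have hCb : 0 ≤ b / Real.sqrt n * lam1 ^ k := by positivity
    have hsumlow : (a / Real.sqrt n * lam1 ^ k) * ((1 - δ₀) * (p * n)) ≤ ∑ j, A i j * v j := by
      calc (a / Real.sqrt n * lam1 ^ k) * ((1 - δ₀) * (p * n))
          ≤ (a / Real.sqrt n * lam1 ^ k) * (∑ j, A i j) :=
            mul_le_mul_of_nonneg_left (hrow i).1 hCa
        _ = ∑ j, A i j * (a / Real.sqrt n * lam1 ^ k) := by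
            rw [Finset.mul_sum]; exact Finset.sum_congr rfl fun j _ => mul_comm _ _
        _ ≤ ∑ j, A i j * v j :=
            Finset.sum_le_sum fun j _ => mul_le_mul_of_nonneg_left (hva j) (hpos i j)
    have hsumhigh : ∑ j, A i j * v j ≤ (b / Real.sqrt n * lam1 ^ k) * ((1 + δ₀) * (p * n)) := by
      calc ∑ j, A i j * v j
          ≤ ∑ j, A i j * (b / Real.sqrt n * lam1 ^ k) :=
            Finset.sum_le_sum fun j _ => mul_le_mul_of_nonneg_left (hvb j) (hpos i j)
        _ = (b / Real.sqrt n * lam1 ^ k) * (∑ j, A i j) := by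
            rw [Finset.mul_sum]; exact Finset.sum_congr rfl fun j _ => mul_comm _ _
        _ ≤ (b / Real.sqrt n * lam1 ^ k) * ((1 + δ₀) * (p * n)) :=
            mul_le_mul_of_nonneg_left (hrow i).2 hCb
    have hlow := aux_low (p * n) lam1 δ₀ δ₁ δ' a hpn hδ₁0 hδ₁1 hδ₀' heq ha0 ha1 hlam.1 hlam.2
    have hhigh := aux_high (p * n) lam1 δ₀ δ₁ δ' b hpn hδ₁0 hδ₁1 hδ₀' heq hb0 hb1 hlam.1 hlam.2
    have hpow1 : 0 < lam1 ^ (k+1) := pow_pos hlam1 (k+1)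
    constructor
    · rw [le_div_iff₀ hpow1, hEq]
      push_cast
      calc (1 - 2 * ((k:ℝ) + 1) * δ') / Real.sqrt n * lam1 ^ (k+1)
          = ((a - 2 * δ') * lam1) * (lam1 ^ k / Real.sqrt n) := by
            rw [pow_succ]; rw [ha]; ring
        _ ≤ ((1 - δ₀) * (p * n) * a) * (lam1 ^ k / Real.sqrt n) := by
            apply mul_le_mul_of_nonneg_right hlow
            positivity
        _ = (a / Real.sqrt n * lam1 ^ k) * ((1 - δ₀) * (p * n)) := by ring
        _ ≤ ∑ j, A i j * v j := hsumlow
    · rw [div_le_iff₀ hpow1, hEq]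
      push_cast
      calc ∑ j, A i j * v j
          ≤ (b / Real.sqrt n * lam1 ^ k) * ((1 + δ₀) * (p * n)) := hsumhigh
        _ = ((1 + δ₀) * (p * n) * b) * (lam1 ^ k / Real.sqrt n) := by ring
        _ ≤ ((b + 2 * δ') * lam1) * (lam1 ^ k / Real.sqrt n) := by
            apply mul_le_mul_of_nonneg_right hhigh
            positivity
        _ = (1 + 2 * ((k:ℝ) + 1) * δ') / Real.sqrt n * lam1 ^ (k+1) := by
            rw [pow_succ]; rw [hb]; ring
end

section
/- Let n ≥ 1 and p > 0, let A be a symmetric n×n real matrix with nonnegative entries whose row sums all lie in [(1−δ₀)pn, (1+δ₀)pn] with δ₀ ≥ 0, and whose largest eigenvalue λ₁ lies in [(1−δ₁)pn, (1+δ₁)pn] with 0 ≤ δ₁ < 1 (so λ₁ > 0). Set δ₀' := (1+δ₀)/(1−δ₁) − 1 and assume δ₀' > 0. Let u := n^{−1/2}(1,…,1), let v₁ be a unit-norm eigenvector of A for λ₁, assume c₁ := uᵀv₁ ≠ 0, and set λ(A) := max(λ₂(A), |λ_n(A)|) and ρ := λ(A)/λ₁. Then for every integer k with 0 ≤ k ≤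 1 + 1/(2δ₀'): ‖sign(c₁)·v₁ − u‖_∞ ≤ (1/|c₁| − 1)/√n + 2kδ₀'/(|c₁|·√n) + (√(1−c₁²)/|c₁|)·ρᵏ. -/
set_option maxHeartbeats 1000000

instance {n : ℕ} : Coe (Fin n → ℝ) (EuclideanSpace ℝ (Fin n)) := ⟨WithLp.toLp 2⟩

open Matrix in
private lemma pow_mulVec_eig' {n : ℕ} (A : Matrix (Fin n) (Fin n) ℝ) (v : Fin n → ℝ) (μ : ℝ)
    (h : A *ᵥ v = μ • v) (k : ℕ) : (A ^ k) *ᵥ v = μ ^ k • v := by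
  induction k with
  | zero => simp [Matrix.one_mulVec]
  | succ k ih =>
    rw [pow_succ', ← Matrix.mulVec_mulVec, ih, Matrix.mulVec_smul, h, smul_smul, ← pow_succ]

open Matrix in
private lemma repr_pow_mulVec' {n : ℕ} (A : Matrix (Fin n) (Fin n) ℝ) (hA : A.IsHermitian)
    (k : ℕ) (x : Fin n → ℝ) (j : Fin n) :
    hA.eigenvectorBasis.repr ((A ^ k) *ᵥ x) j
      = hA.eigenvalues j ^ k * hA.eigenvectorBasis.repr x j := by
  rw [OrthonormalBasis.repr_apply_apply, OrthonormalBasis.repr_apply_apply]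
  simp only [PiLp.inner_apply, RCLike.inner_apply, conj_trivial]
  conv_lhs => enter [2, i]; rw [mul_comm]
  have h1 : ∑ i, hA.eigenvectorBasis j i * ((A ^ k) *ᵥ x) i
      = (⇑(hA.eigenvectorBasis j)) ⬝ᵥ ((A ^ k) *ᵥ x) := rfl
  have h2 : (A ^ k).IsHermitian := hA.pow k
  rw [h1, Matrix.dotProduct_mulVec]
  have h3 : (⇑(hA.eigenvectorBasis j)) ᵥ* (A ^ k) = (A ^ k) *ᵥ (⇑(hA.eigenvectorBasis j)) := by
    have h4 := h2.eq
    rw [Matrix.conjTranspose_eq_transpose_of_trivial] at h4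
    rw [← Matrix.mulVec_transpose, h4]
  rw [h3, pow_mulVec_eig' A _ _ (hA.mulVec_eigenvectorBasis j) k]
  simp [smul_dotProduct, dotProduct, mul_comm, Finset.mul_sum, mul_left_comm]

private lemma parseval_mul' {n : ℕ} (B : OrthonormalBasis (Fin n) ℝ (EuclideanSpace ℝ (Fin n)))
    (x y : Fin n → ℝ) : ∑ j, B.repr x j * B.repr y j = ∑ i, x i * y i := by
  have := B.repr.inner_map_map (y : EuclideanSpace ℝ (Fin n)) (x : EuclideanSpace ℝ (Fin n))
  simp only [PiLp.inner_apply, RCLike.inner_apply, conj_trivial] at this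
  exact this

private lemma repr_eq_sum' {n : ℕ} (B : OrthonormalBasis (Fin n) ℝ (EuclideanSpace ℝ (Fin n)))
    (x : Fin n → ℝ) (j : Fin n) : B.repr x j = ∑ i, B j i * x i := by
  rw [OrthonormalBasis.repr_apply_apply]
  simp [PiLp.inner_apply, mul_comm]

open Matrix in
private lemma specD' {n : ℕ} (A : Matrix (Fin n) (Fin n) ℝ) (hA : A.IsHermitian) (t : ℝ)
    (ht : 0 ≤ t)
    (x : Fin n → ℝ) (hx : ∀ j, hA.eigenvectorBasis.repr x j ≠ 0 → |hA.eigenvalues j| ≤ t)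
    (k : ℕ) (i : Fin n) :
    |((A ^ k) *ᵥ x) i| ≤ t ^ k * Real.sqrt (∑ i, x i ^ 2) := by
  set y := (A ^ k) *ᵥ x with hy
  have hy2 : ∑ i', y i' ^ 2 ≤ (t ^ k) ^ 2 * ∑ i', x i' ^ 2 := by
    have h1 : ∑ i', y i' ^ 2 = ∑ j, (hA.eigenvectorBasis.repr y j) ^ 2 := by
      simpa [sq] using (parseval_mul' hA.eigenvectorBasis y y).symm
    have h2 : ∑ i', x i' ^ 2 = ∑ j, (hA.eigenvectorBasis.repr x j) ^ 2 := by
      simpa [sq] using (parseval_mul' hA.eigenvectorBasis x x).symm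
    rw [h1, h2, Finset.mul_sum]
    apply Finset.sum_le_sum
    intro j _
    rw [hy, repr_pow_mulVec']
    by_cases hj : hA.eigenvectorBasis.repr x j = 0
    · simp [hj]
    · have habs := hx j hj
      have h5 : (hA.eigenvalues j ^ k) ^ 2 ≤ (t ^ k) ^ 2 := by
        have h6 : |hA.eigenvalues j| ^ k ≤ t ^ k := pow_le_pow_left₀ (abs_nonneg _) habs k
        calc (hA.eigenvalues j ^ k) ^ 2 = (|hA.eigenvalues j| ^ k) ^ 2 := by
              rw [← abs_pow, sq_abs]
          _ ≤ (t ^ k) ^ 2 := pow_le_pow_left₀ (pow_nonneg (abs_nonneg _) k) h6 2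
      calc (hA.eigenvalues j ^ k * hA.eigenvectorBasis.repr x j) ^ 2
          = (hA.eigenvalues j ^ k) ^ 2 * (hA.eigenvectorBasis.repr x j) ^ 2 := by ring
        _ ≤ (t ^ k) ^ 2 * (hA.eigenvectorBasis.repr x j) ^ 2 :=
            mul_le_mul_of_nonneg_right h5 (sq_nonneg _)
  have h3 : y i ^ 2 ≤ ∑ i', y i' ^ 2 :=
    Finset.single_le_sum (fun j _ => sq_nonneg (y j)) (Finset.mem_univ i)
  have h4 : |y i| = Real.sqrt (y i ^ 2) := (Real.sqrt_sq_eq_abs _).symm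
  rw [h4]
  calc Real.sqrt (y i ^ 2) ≤ Real.sqrt ((t ^ k) ^ 2 * ∑ i', x i' ^ 2) :=
        Real.sqrt_le_sqrt (h3.trans hy2)
    _ = t ^ k * Real.sqrt (∑ i', x i' ^ 2) := by
        rw [Real.sqrt_mul (sq_nonneg _), Real.sqrt_sq (pow_nonneg ht k)]

private lemma powUB' (x : ℝ) (hx : 0 ≤ x) (k : ℕ) (hk : 2 * ((k : ℝ) - 1) * x ≤ 1) :
    (1 + x) ^ k ≤ 1 + 2 * k * x := by
  induction k with
  | zero => simp
  | succ k ih =>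
    have hk2 : 2 * (k : ℝ) * x ≤ 1 := by push_cast at hk ⊢; linarith
    have hk' : 2 * ((k : ℝ) - 1) * x ≤ 1 := by nlinarith
    have h1 := ih hk'
    rw [pow_succ]
    push_cast
    nlinarith [mul_le_mul_of_nonneg_right h1 (by linarith : (0:ℝ) ≤ 1 + x),
      mul_le_mul_of_nonneg_right hk2 hx]

private lemma powLB' (x : ℝ) (hx : 0 ≤ x) (k : ℕ) : 1 - 2 * k * x ≤ (max (1 - x) 0) ^ k := by
  rcases le_or_gt x 1 with h | h
  · rw [max_eq_left (by linarith)]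
    have h1 := one_add_mul_le_pow (by linarith : (-2 : ℝ) ≤ -x) k
    have h2 : (0:ℝ) ≤ (k : ℝ) * x := by positivity
    rw [show (1:ℝ) + -x = 1 - x from by ring] at h1
    linarith
  · cases k with
    | zero => simp
    | succ m =>
      have h1 : (0:ℝ) ≤ (max (1 - x) 0) ^ (m + 1) := pow_nonneg (le_max_right _ _) _
      have h2 : (1:ℝ) ≤ (m : ℝ) + 1 := by
        have := (Nat.cast_nonneg m : (0:ℝ) ≤ (m:ℝ)); linarith
      push_cast
      nlinarith

open Matrix in
private lemma powEntry' {n : ℕ} (A : Matrix (Fin n) (Fin n) ℝ) (hpos : ∀ i j, 0 ≤ A i j)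
    (a b : ℝ) (ha : 0 ≤ a) (hrow : ∀ i, a ≤ ∑ j, A i j ∧ ∑ j, A i j ≤ b)
    (c : ℝ) (hc : 0 ≤ c) (k : ℕ) (i : Fin n) :
    a ^ k * c ≤ ((A ^ k) *ᵥ (fun _ => c)) i ∧ ((A ^ k) *ᵥ (fun _ => c)) i ≤ b ^ k * c := by
  induction k generalizing i with
  | zero => simp [Matrix.one_mulVec]
  | succ k ih =>
    have hb : 0 ≤ b := le_trans ha (le_trans (hrow i).1 (hrow i).2)
    rw [show A ^ (k + 1) = A * A ^ k from pow_succ' A k, ← Matrix.mulVec_mulVec]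
    have hentry : (A *ᵥ ((A ^ k) *ᵥ fun _ => c)) i = ∑ j, A i j * ((A ^ k) *ᵥ fun _ => c) j := rfl
    rw [hentry]
    constructor
    · calc a ^ (k + 1) * c = a * (a ^ k * c) := by ring
        _ ≤ (∑ j, A i j) * (a ^ k * c) :=
            mul_le_mul_of_nonneg_right (hrow i).1 (by positivity)
        _ = ∑ j, A i j * (a ^ k * c) := Finset.sum_mul _ _ _
        _ ≤ ∑ j, A i j * ((A ^ k) *ᵥ fun _ => c) j :=
            Finset.sum_le_sum fun j _ => mul_le_mul_of_nonneg_left (ih j).1 (hpos i j)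
    · calc ∑ j, A i j * ((A ^ k) *ᵥ fun _ => c) j
          ≤ ∑ j, A i j * (b ^ k * c) :=
            Finset.sum_le_sum fun j _ => mul_le_mul_of_nonneg_left (ih j).2 (hpos i j)
        _ = (∑ j, A i j) * (b ^ k * c) := (Finset.sum_mul _ _ _).symm
        _ ≤ b * (b ^ k * c) :=
            mul_le_mul_of_nonneg_right (hrow i).2 (by positivity)
        _ = b ^ (k + 1) * c := by ring
/-- Let `n ≥ 2`, `p > 0`, let `A` be a symmetric `n×n` real matrix with
nonnegative entries whose row sums all lie in `[(1−δ₀)pn, (1+δ₀)pn]` (`δ₀ ≥ 0`) and whose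
largest eigenvalue `λ₁ = ev 0` lies in `[(1−δ₁)pn, (1+δ₁)pn]` (`0 ≤ δ₁ < 1`).  Set
`δ₀' := (1+δ₀)/(1−δ₁) − 1 > 0`, let `u := n^{−1/2}(1,…,1)`, let `v₁` be a unit-norm
eigenvector of `A` for `λ₁` with `c₁ := uᵀv₁ ≠ 0`, and set `λ(A) := max(λ₂(A), |λ_n(A)|)`
and `ρ := λ(A)/λ₁`.  Then for every integer `k` with `0 ≤ k ≤ 1 + 1/(2δ₀')`:
`‖sign(c₁)·v₁ − u‖_∞ ≤ (1/|c₁| − 1)/√n + 2kδ₀'/(|c₁|√n) + (√(1−c₁²)/|c₁|)·ρᵏ`. -/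
theorem stmt12 (n : ℕ) (hn : 2 ≤ n) (p : ℝ) (hp : 0 < p) (δ₀ δ₁ : ℝ)
    (hδ₀ : 0 ≤ δ₀) (hδ₁0 : 0 ≤ δ₁) (hδ₁1 : δ₁ < 1)
    (A : Matrix (Fin n) (Fin n) ℝ) (hA : A.IsHermitian)
    (hpos : ∀ i j, 0 ≤ A i j)
    (hrow : ∀ i, (1 - δ₀) * (p * n) ≤ ∑ j, A i j ∧ ∑ j, A i j ≤ (1 + δ₀) * (p * n))
    (ev : Fin n → ℝ) (σ : Equiv.Perm (Fin n))
    (hev : ev = hA.eigenvalues ∘ σ) (hsort : Antitone ev)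
    (hlam : (1 - δ₁) * (p * n) ≤ ev ⟨0, by omega⟩ ∧ ev ⟨0, by omega⟩ ≤ (1 + δ₁) * (p * n))
    (hδ₀' : 0 < (1 + δ₀) / (1 - δ₁) - 1)
    (v₁ : Fin n → ℝ) (hv : A.mulVec v₁ = ev ⟨0, by omega⟩ • v₁) (hunit : ∑ i, v₁ i ^ 2 = 1)
    (hc1 : (∑ i, (Real.sqrt n)⁻¹ * v₁ i) ≠ 0) :
    ∀ k : ℕ, (k : ℝ) ≤ 1 + 1 / (2 * ((1 + δ₀) / (1 - δ₁) - 1)) →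
      ∀ i : Fin n,
        |Real.sign (∑ i, (Real.sqrt n)⁻¹ * v₁ i) * v₁ i - (Real.sqrt n)⁻¹| ≤
          (1 / |∑ i, (Real.sqrt n)⁻¹ * v₁ i| - 1) / Real.sqrt n
          + 2 * k * ((1 + δ₀) / (1 - δ₁) - 1)
              / (|∑ i, (Real.sqrt n)⁻¹ * v₁ i| * Real.sqrt n)
          + (Real.sqrt (1 - (∑ i, (Real.sqrt n)⁻¹ * v₁ i) ^ 2)
              / |∑ i, (Real.sqrt n)⁻¹ * v₁ i|)
            * (max (ev ⟨1, by omega⟩) |ev ⟨n - 1, by omega⟩| / ev ⟨0, by omega⟩) ^ k := by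

  intro k hk i
  have hn0 : (0:ℝ) < n := by positivity
  have hsq : 0 < Real.sqrt n := Real.sqrt_pos.mpr hn0
  have hsqsq : Real.sqrt n * Real.sqrt n = (n:ℝ) := Real.mul_self_sqrt hn0.le
  set c := ∑ i, (Real.sqrt n)⁻¹ * v₁ i with hcdef
  have h1δ₁ : 0 < 1 - δ₁ := by linarith
  have hpn : 0 < p * (n:ℝ) := by positivity
  have hlampos : (0:ℝ) < ev ⟨0, by omega⟩ :=
    lt_of_lt_of_le (by positivity : (0:ℝ) < (1 - δ₁) * (p * n)) hlam.1
  set δ' := (1 + δ₀) / (1 - δ₁) - 1 with hδ'def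
  have hδ'pos : 0 < δ' := hδ₀'
  have hsum1 : ∑ _i : Fin n, ((Real.sqrt n)⁻¹) ^ 2 = 1 := by
    rw [Finset.sum_const, Finset.card_univ, Fintype.card_fin, nsmul_eq_mul, sq, ← mul_inv,
      hsqsq]
    field_simp
  have hc2le : c ^ 2 ≤ 1 := by
    have hCS := Finset.sum_mul_sq_le_sq_mul_sq Finset.univ (fun _ : Fin n => (Real.sqrt n)⁻¹) v₁
    rw [hsum1, hunit, one_mul] at hCS
    exact hCS
  have hcpos : 0 < |c| := abs_pos.mpr hc1
  have hcle1 : |c| ≤ 1 := by nlinarith [sq_abs c, abs_nonneg c]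
  -- the orthogonal complement vector
  set w : Fin n → ℝ := fun i => (Real.sqrt n)⁻¹ - c * v₁ i with hwdef
  have hw_orth : ∑ i', w i' * v₁ i' = 0 := by
    have h1 : ∀ i' : Fin n, w i' * v₁ i' = (Real.sqrt n)⁻¹ * v₁ i' - c * v₁ i' ^ 2 := by
      intro i'; simp only [hwdef]; ring
    have e1 : ∑ i', c * v₁ i' ^ 2 = c * ∑ i', v₁ i' ^ 2 := (Finset.mul_sum _ _ _).symm
    rw [Finset.sum_congr rfl fun i' _ => h1 i', Finset.sum_sub_distrib, e1, hunit, ← hcdef]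
    ring
  have hw_norm : ∑ i', w i' ^ 2 = 1 - c ^ 2 := by
    have h1 : ∀ i' : Fin n, w i' ^ 2
        = ((Real.sqrt n)⁻¹) ^ 2 - 2 * c * ((Real.sqrt n)⁻¹ * v₁ i') + c ^ 2 * v₁ i' ^ 2 := by
      intro i'; simp only [hwdef]; ring
    have e2 : ∑ i', 2 * c * ((Real.sqrt n)⁻¹ * v₁ i')
        = 2 * c * ∑ i', (Real.sqrt n)⁻¹ * v₁ i' := (Finset.mul_sum _ _ _).symm
    have e3 : ∑ i', c ^ 2 * v₁ i' ^ 2 = c ^ 2 * ∑ i', v₁ i' ^ 2 := (Finset.mul_sum _ _ _).symm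
    rw [Finset.sum_congr rfl fun i' _ => h1 i', Finset.sum_add_distrib, Finset.sum_sub_distrib,
      e2, e3, hsum1, hunit, ← hcdef]
    ring
  have hw2nonneg : (0:ℝ) ≤ 1 - c ^ 2 := by linarith
  -- decomposition  u = c • v₁ + w
  have hu_eq : (fun _ : Fin n => (Real.sqrt n)⁻¹) = c • v₁ + w := by
    funext j'; simp only [hwdef, Pi.add_apply, Pi.smul_apply, smul_eq_mul]; ring
  have hdecomp : ∀ i' : Fin n, ((A ^ k).mulVec (fun _ => (Real.sqrt n)⁻¹)) i'
      = c * (ev ⟨0, by omega⟩) ^ k * v₁ i' + ((A ^ k).mulVec w) i' := by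
    intro i'
    rw [hu_eq, Matrix.mulVec_add, Matrix.mulVec_smul, pow_mulVec_eig' A v₁ _ hv k]
    simp only [Pi.add_apply, Pi.smul_apply, smul_eq_mul]
    ring
  -- entrywise bounds on A^k u
  have hrow' : ∀ i', max ((1 - δ₀) * (p * n)) 0 ≤ ∑ j, A i' j ∧ ∑ j, A i' j ≤ (1 + δ₀) * (p * n) := by
    intro i'
    exact ⟨max_le (hrow i').1 (Finset.sum_nonneg fun j _ => hpos i' j), (hrow i').2⟩
  have hCu := powEntry' A hpos (max ((1 - δ₀) * (p * n)) 0) ((1 + δ₀) * (p * n))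
    (le_max_right _ _) hrow' ((Real.sqrt n)⁻¹) (by positivity) k
  -- relating the bounds to powers of the top eigenvalue
  have hkey1 : (1 + δ') * (1 - δ₁) = 1 + δ₀ := by
    rw [hδ'def]; field_simp; ring
  have hbk : ((1 + δ₀) * (p * n)) ^ k ≤ (1 + δ') ^ k * (ev ⟨0, by omega⟩) ^ k := by
    rw [← mul_pow]
    apply pow_le_pow_left₀ (by positivity)
    calc (1 + δ₀) * (p * n) = (1 + δ') * ((1 - δ₁) * (p * n)) := by rw [← hkey1]; ring
      _ ≤ (1 + δ') * ev ⟨0, by omega⟩ :=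
          mul_le_mul_of_nonneg_left hlam.1 (by nlinarith)
  have hak : (max (1 - δ') 0) ^ k * (ev ⟨0, by omega⟩) ^ k ≤ (max ((1 - δ₀) * (p * n)) 0) ^ k := by
    rw [← mul_pow]
    apply pow_le_pow_left₀ (mul_nonneg (le_max_right _ _) hlampos.le)
    rcases le_or_gt (1 - δ') 0 with h | h
    · rw [max_eq_right h, zero_mul]; exact le_max_right _ _
    · rw [max_eq_left h.le]
      have h6 : (1 - δ') * (1 + δ₁) ≤ 1 - δ₀ := by
        have h7 : δ' * (1 - δ₁) = (1 + δ₀) - (1 - δ₁) := by rw [hδ'def]; field_simp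
        nlinarith [mul_nonneg hδ₀ hδ₁0, sq_nonneg δ₁]
      calc (1 - δ') * ev ⟨0, by omega⟩ ≤ (1 - δ') * ((1 + δ₁) * (p * n)) :=
            mul_le_mul_of_nonneg_left hlam.2 h.le
        _ = ((1 - δ') * (1 + δ₁)) * (p * n) := by ring
        _ ≤ (1 - δ₀) * (p * n) := mul_le_mul_of_nonneg_right h6 hpn.le
        _ ≤ max ((1 - δ₀) * (p * n)) 0 := le_max_left _ _
  have hlamk : (0:ℝ) < (ev ⟨0, by omega⟩) ^ k := pow_pos hlampos k
  -- scalar power bounds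
  have h2k1 : 2 * ((k : ℝ) - 1) * δ' ≤ 1 := by
    have h8 : (k : ℝ) - 1 ≤ 1 / (2 * δ') := by linarith
    have h9 := (le_div_iff₀ (by positivity : (0:ℝ) < 2 * δ')).mp h8
    linarith
  have hup_pow : (1 + δ') ^ k ≤ 1 + 2 * k * δ' := powUB' δ' hδ'pos.le k h2k1
  have hlo_pow : 1 - 2 * k * δ' ≤ (max (1 - δ') 0) ^ k := powLB' δ' hδ'pos.le k
  -- middle bound
  have hmid : ∀ i' : Fin n, |((A ^ k).mulVec (fun _ => (Real.sqrt n)⁻¹)) i' / (ev ⟨0, by omega⟩) ^ k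
      - (Real.sqrt n)⁻¹| ≤ 2 * k * δ' * (Real.sqrt n)⁻¹ := by
    intro i'
    have hlo2 : (1 - 2 * k * δ') * (Real.sqrt n)⁻¹ * (ev ⟨0, by omega⟩) ^ k
        ≤ ((A ^ k).mulVec (fun _ => (Real.sqrt n)⁻¹)) i' := by
      calc (1 - 2 * k * δ') * (Real.sqrt n)⁻¹ * (ev ⟨0, by omega⟩) ^ k
          ≤ (max (1 - δ') 0) ^ k * (Real.sqrt n)⁻¹ * (ev ⟨0, by omega⟩) ^ k := by
            apply mul_le_mul_of_nonneg_right _ hlamk.le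
            exact mul_le_mul_of_nonneg_right hlo_pow (by positivity)
        _ = ((max (1 - δ') 0) ^ k * (ev ⟨0, by omega⟩) ^ k) * (Real.sqrt n)⁻¹ := by ring
        _ ≤ (max ((1 - δ₀) * (p * n)) 0) ^ k * (Real.sqrt n)⁻¹ :=
            mul_le_mul_of_nonneg_right hak (by positivity)
        _ ≤ _ := (hCu i').1
    have hup2 : ((A ^ k).mulVec (fun _ => (Real.sqrt n)⁻¹)) i'
        ≤ (1 + 2 * k * δ') * (Real.sqrt n)⁻¹ * (ev ⟨0, by omega⟩) ^ k := by
      calc ((A ^ k).mulVec (fun _ => (Real.sqrt n)⁻¹)) i' ≤ ((1 + δ₀) * (p * n)) ^ k * (Real.sqrt n)⁻¹ :=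
            (hCu i').2
        _ ≤ ((1 + δ') ^ k * (ev ⟨0, by omega⟩) ^ k) * (Real.sqrt n)⁻¹ :=
            mul_le_mul_of_nonneg_right hbk (by positivity)
        _ ≤ ((1 + 2 * k * δ') * (ev ⟨0, by omega⟩) ^ k) * (Real.sqrt n)⁻¹ := by
            apply mul_le_mul_of_nonneg_right _ (by positivity)
            exact mul_le_mul_of_nonneg_right hup_pow hlamk.le
        _ = (1 + 2 * k * δ') * (Real.sqrt n)⁻¹ * (ev ⟨0, by omega⟩) ^ k := by ring
    rw [abs_le]
    constructor
    · have h10 : (1 - 2 * k * δ') * (Real.sqrt n)⁻¹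
          ≤ (A ^ k).mulVec (fun _ => (Real.sqrt n)⁻¹) i' / (ev ⟨0, by omega⟩) ^ k :=
        (le_div_iff₀ hlamk).mpr hlo2
      linarith
    · have h11 : (A ^ k).mulVec (fun _ => (Real.sqrt n)⁻¹) i' / (ev ⟨0, by omega⟩) ^ k
          ≤ (1 + 2 * k * δ') * (Real.sqrt n)⁻¹ :=
        (div_le_iff₀ hlamk).mpr (by linarith [hup2])
      linarith
  -- tail bound via the spectral theorem
  have hLnonneg : 0 ≤ max (ev ⟨1, by omega⟩) |ev ⟨n - 1, by omega⟩| :=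
    le_trans (abs_nonneg _) (le_max_right _ _)
  have hev' : ∀ m : Fin n, hA.eigenvalues m = ev (σ.symm m) := by
    intro m; rw [hev]; simp
  have hub2 : ∀ m : Fin n, ev m ≤ ev ⟨0, by omega⟩ := by
    intro m; exact hsort (by simp [Fin.le_def])
  have hlb2 : ∀ m : Fin n, ev ⟨n - 1, by omega⟩ ≤ ev m := by
    intro m
    apply hsort
    have := m.isLt
    simp only [Fin.le_def]
    omega
  have h1le : ∀ m : Fin n, m ≠ ⟨0, by omega⟩ → ev m ≤ ev ⟨1, by omega⟩ := by
    intro m hm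
    apply hsort
    have h0 : m.1 ≠ 0 := fun h => hm (Fin.ext h)
    simp only [Fin.le_def]
    omega
  have horth_repr : ∀ j, hA.eigenvectorBasis.repr w j ≠ 0 →
      |hA.eigenvalues j| ≤ max (ev ⟨1, by omega⟩) |ev ⟨n - 1, by omega⟩| := by
    intro j hj
    rw [hev' j]
    by_cases hcase : σ.symm j = ⟨0, by omega⟩
    · by_cases hcase2 : ev ⟨1, by omega⟩ = ev ⟨0, by omega⟩
      · rw [hcase, abs_le]
        constructor
        · calc -(max (ev ⟨1, by omega⟩) |ev ⟨n - 1, by omega⟩|)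
              ≤ -|ev ⟨n - 1, by omega⟩| := neg_le_neg (le_max_right _ _)
            _ ≤ ev ⟨n - 1, by omega⟩ := neg_abs_le _
            _ ≤ ev ⟨0, by omega⟩ := hlb2 _
        · calc ev ⟨0, by omega⟩ = ev ⟨1, by omega⟩ := hcase2.symm
            _ ≤ _ := le_max_left _ _
      · exfalso
        apply hj
        have hv1coef : ∀ j', j' ≠ j → hA.eigenvectorBasis.repr v₁ j' = 0 := by
          intro j' hj'
          have h5 := repr_pow_mulVec' A hA 1 v₁ j'
          rw [pow_one] at h5
          rw [hv] at h5
          have h6 : hA.eigenvectorBasis.repr (((ev ⟨0, by omega⟩ : ℝ) • v₁ : Fin n → ℝ)) j'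
              = ev ⟨0, by omega⟩ * hA.eigenvectorBasis.repr v₁ j' := by
            rw [repr_eq_sum', repr_eq_sum', Finset.mul_sum]
            exact Finset.sum_congr rfl fun i' _ => by
              simp only [Pi.smul_apply, smul_eq_mul]; ring
          rw [h6] at h5
          have hne : hA.eigenvalues j' ≠ ev ⟨0, by omega⟩ := by
            rw [hev' j']
            have hssne : σ.symm j' ≠ ⟨0, by omega⟩ := by
              intro hcon
              exact hj' (σ.symm.injective (hcon.trans hcase.symm))
            have h7 := h1le (σ.symm j') hssne
            have h8 : ev ⟨1, by omega⟩ < ev ⟨0, by omega⟩ := lt_of_le_of_ne (hub2 _) hcase2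
            exact ne_of_lt (lt_of_le_of_lt h7 h8)
          have h9 : (hA.eigenvalues j' - ev ⟨0, by omega⟩) * hA.eigenvectorBasis.repr v₁ j'
              = 0 := by
            rw [sub_mul]
            rw [pow_one] at h5
            linarith [h5]
          exact (mul_eq_zero.mp h9).resolve_left (sub_ne_zero.mpr hne)
        have hParv : ∑ j', (hA.eigenvectorBasis.repr v₁ j') ^ 2 = 1 := by
          have hpv := parseval_mul' hA.eigenvectorBasis v₁ v₁
          calc ∑ j', (hA.eigenvectorBasis.repr v₁ j') ^ 2
              = ∑ j', hA.eigenvectorBasis.repr v₁ j' * hA.eigenvectorBasis.repr v₁ j' := by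
                simp [sq]
            _ = ∑ i', v₁ i' * v₁ i' := hpv
            _ = ∑ i', v₁ i' ^ 2 := by simp [sq]
            _ = 1 := hunit
        have hvj : hA.eigenvectorBasis.repr v₁ j ≠ 0 := by
          intro h0'
          have hz : ∑ j', (hA.eigenvectorBasis.repr v₁ j') ^ 2 = 0 :=
            Finset.sum_eq_zero fun j' _ => by
              by_cases hj2 : j' = j
              · rw [hj2, h0']; ring
              · rw [hv1coef j' hj2]; ring
          rw [hParv] at hz
          norm_num at hz
        have hione : ∑ j', hA.eigenvectorBasis.repr w j' * hA.eigenvectorBasis.repr v₁ j'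
            = 0 := by
          rw [parseval_mul']
          exact hw_orth
        have hsingle : ∑ j', hA.eigenvectorBasis.repr w j' * hA.eigenvectorBasis.repr v₁ j'
            = hA.eigenvectorBasis.repr w j * hA.eigenvectorBasis.repr v₁ j :=
          Finset.sum_eq_single j (fun j' _ hj' => by rw [hv1coef j' hj', mul_zero])
            (fun h => absurd (Finset.mem_univ j) h)
        exact (mul_eq_zero.mp (hsingle.symm.trans hione)).resolve_right hvj
    · rw [abs_le]
      constructor
      · calc -(max (ev ⟨1, by omega⟩) |ev ⟨n - 1, by omega⟩|)
            ≤ -|ev ⟨n - 1, by omega⟩| := neg_le_neg (le_max_right _ _)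
          _ ≤ ev ⟨n - 1, by omega⟩ := neg_abs_le _
          _ ≤ ev (σ.symm j) := hlb2 _
      · exact le_trans (h1le _ hcase) (le_max_left _ _)
  have htail : ∀ i', |(A ^ k).mulVec w i'|
      ≤ (max (ev ⟨1, by omega⟩) |ev ⟨n - 1, by omega⟩|) ^ k * Real.sqrt (1 - c ^ 2) := by
    intro i'
    have h12 := specD' A hA _ hLnonneg w horth_repr k i'
    rwa [hw_norm] at h12
  -- final assembly
  have hsign : Real.sign c / c = 1 / |c| := by
    rcases lt_or_gt_of_ne hc1 with h | h
    · rw [Real.sign_of_neg h, abs_of_neg h]; field_simp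
    · rw [Real.sign_of_pos h, abs_of_pos h]
  have hlamkne : ((ev ⟨0, by omega⟩ : ℝ)) ^ k ≠ 0 := hlamk.ne'
  have hkeq : Real.sign c * v₁ i - (Real.sqrt n)⁻¹
      = (1 / |c|) * ((A ^ k).mulVec (fun _ => (Real.sqrt n)⁻¹) i / (ev ⟨0, by omega⟩) ^ k
            - (Real.sqrt n)⁻¹)
        - (1 / |c|) * ((A ^ k).mulVec w i / (ev ⟨0, by omega⟩) ^ k)
        + (1 / |c| - 1) * (Real.sqrt n)⁻¹ := by
    rw [← hsign]
    rw [hdecomp i]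
    field_simp
    ring
  have honele : (1:ℝ) ≤ 1 / |c| := by
    rw [le_div_iff₀ hcpos]; linarith
  have e_abs1 : |(1 / |c|) * ((A ^ k).mulVec (fun _ => (Real.sqrt n)⁻¹) i
        / (ev ⟨0, by omega⟩) ^ k - (Real.sqrt n)⁻¹)|
      ≤ (1 / |c|) * (2 * k * δ' * (Real.sqrt n)⁻¹) := by
    rw [abs_mul, abs_of_nonneg (by positivity : (0:ℝ) ≤ 1 / |c|)]
    exact mul_le_mul_of_nonneg_left (hmid i) (by positivity)
  have e_abs2 : |(1 / |c|) * ((A ^ k).mulVec w i / (ev ⟨0, by omega⟩) ^ k)|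
      ≤ (1 / |c|) * ((max (ev ⟨1, by omega⟩) |ev ⟨n - 1, by omega⟩|) ^ k
          * Real.sqrt (1 - c ^ 2) / (ev ⟨0, by omega⟩) ^ k) := by
    rw [abs_mul, abs_of_nonneg (by positivity : (0:ℝ) ≤ 1 / |c|), abs_div,
      abs_of_pos hlamk]
    apply mul_le_mul_of_nonneg_left _ (by positivity)
    gcongr
    exact htail i
  have e_abs3 : |(1 / |c| - 1) * (Real.sqrt n)⁻¹| = (1 / |c| - 1) * (Real.sqrt n)⁻¹ :=
    abs_of_nonneg (mul_nonneg (by linarith) (by positivity))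
  have hfinal1 : (1 / |c|) * (2 * k * δ' * (Real.sqrt n)⁻¹)
      = 2 * k * δ' / (|c| * Real.sqrt n) := by
    field_simp
  have hfinal2 : (1 / |c|) * ((max (ev ⟨1, by omega⟩) |ev ⟨n - 1, by omega⟩|) ^ k
        * Real.sqrt (1 - c ^ 2) / (ev ⟨0, by omega⟩) ^ k)
      = Real.sqrt (1 - c ^ 2) / |c|
          * ((max (ev ⟨1, by omega⟩) |ev ⟨n - 1, by omega⟩|) / ev ⟨0, by omega⟩) ^ k := by
    rw [div_pow]
    field_simp
  have hfinal3 : (1 / |c| - 1) * (Real.sqrt n)⁻¹ = (1 / |c| - 1) / Real.sqrt n :=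
    (div_eq_mul_inv (1 / |c| - 1) (Real.sqrt n)).symm
  rw [hkeq]
  have tri : ∀ X Y Z : ℝ, |X - Y + Z| ≤ |X| + |Y| + |Z| := by
    intro X Y Z
    calc |X - Y + Z| ≤ |X - Y| + |Z| := abs_add_le _ _
      _ ≤ (|X| + |Y|) + |Z| := add_le_add_left (abs_sub _ _) _
  refine le_trans (tri _ _ _) ?_
  rw [e_abs3]
  rw [hδ'def] at e_abs1 hfinal1 ⊢
  linarith [e_abs1, e_abs2, hfinal1, hfinal2, hfinal3]
end
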